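/- arXiv:1908.10914 — 9 statements merged into one kernel-verified Lean document; each statement's English description precedes it below -/
import Mathlib

section
/- Let (V, H) be a hypergraph with no isolated vertices, where V is finite with |V| > n². Then (V, H) contains a partition of size greater than n: there exist D ⊆ V with |D| > n and P ⊆ H such that every element of D is contained in exactly one member of P. -/
theorem finite_hypergraph_partition {V : Type*} [Fintype V] (H : Set (Set V)) (n : ℕ)
    (hno : ∀ v : V, ∃ E ∈ H, v ∈ E) (hcard : Fintype.card V > n ^ 2) :
    ∃ (D : Finset V) (P : Set (Set V)), P ⊆ H ∧ D.card > n ∧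
      ∀ v ∈ D, ∃! E, E ∈ P ∧ v ∈ E := by
  classical
  by_cases hbig : ∃ E ∈ H, n < (Set.toFinite E).toFinset.card
  · obtain ⟨E, hE, hEcard⟩ := hbig
    refine ⟨(Set.toFinite E).toFinset, {E}, by simpa using hE, hEcard, ?_⟩
    intro v hv
    refine ⟨E, ⟨rfl, by simpa using hv⟩, ?_⟩
    rintro F ⟨hF, -⟩
    exact hF
  push_neg at hbig
  -- consider covers of V by finite subfamilies of H
  set S : Set (Finset (Set V)) :=
    {C | ↑C ⊆ H ∧ ∀ v : V, ∃ E ∈ C, v ∈ E} with hS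
  have hSne : S.Nonempty := by
    choose f hf1 hf2 using hno
    refine ⟨Finset.image f Finset.univ, ?_, ?_⟩
    · intro E hEmem
      simp only [Finset.coe_image] at hEmem
      obtain ⟨v, -, rfl⟩ := hEmem
      exact hf1 v
    · intro v
      exact ⟨f v, Finset.mem_image_of_mem f (Finset.mem_univ v), hf2 v⟩
  -- take a cover of minimal cardinality
  have h1 : ∃ k, ∃ C ∈ S, C.card = k := ⟨_, hSne.choose, hSne.choose_spec, rfl⟩
  obtain ⟨C, hCS, hCk⟩ := Nat.find_spec h1
  have hCmin : ∀ C' ∈ S, C.card ≤ C'.card := by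
    intro C' hC'
    rw [hCk]
    exact Nat.find_min' h1 ⟨C', hC', rfl⟩
  -- each edge of C has a private vertex
  have hpriv : ∀ E ∈ C, ∃ v, v ∈ E ∧ ∀ F ∈ C, v ∈ F → F = E := by
    intro E hE
    by_contra h
    push_neg at h
    have herase : C.erase E ∈ S := by
      constructor
      · exact Set.Subset.trans (by exact_mod_cast Finset.erase_subset E C) hCS.1
      · intro v
        obtain ⟨F, hF, hvF⟩ := hCS.2 v
        by_cases hFE : F = E
        · subst hFE
          obtain ⟨G, hG, hvG, hGE⟩ := h v hvF
          exact ⟨G, Finset.mem_erase.mpr ⟨hGE, hG⟩, hvG⟩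
        · exact ⟨F, Finset.mem_erase.mpr ⟨hFE, hF⟩, hvF⟩
    have h2 := hCmin _ herase
    have h3 := Finset.card_erase_lt_of_mem hE
    omega
  choose g hg1 hg2 using hpriv
  -- the private vertices form D
  set D : Finset V := C.attach.image (fun x => g x.1 x.2) with hD
  have hDcard : D.card = C.card := by
    rw [hD, Finset.card_image_of_injOn, Finset.card_attach]
    intro x _ y _ hxy
    have hxy' : g x.1 x.2 = g y.1 y.2 := hxy
    have : g x.1 x.2 ∈ (y.1 : Set V) := hxy' ▸ hg1 y.1 y.2
    have := hg2 x.1 x.2 y.1 y.2 this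
    exact Subtype.ext this.symm
  -- C covers V, all edges small, so C.card > n
  have hcover : (Finset.univ : Finset V) ⊆
      C.biUnion (fun E => (Set.toFinite E).toFinset) := by
    intro v _
    obtain ⟨E, hE, hvE⟩ := hCS.2 v
    exact Finset.mem_biUnion.mpr ⟨E, hE, (Set.Finite.mem_toFinset _).mpr hvE⟩
  have h2 : Fintype.card V ≤ C.card * n := by
    calc Fintype.card V = (Finset.univ : Finset V).card := (Finset.card_univ).symm
      _ ≤ (C.biUnion (fun E => (Set.toFinite E).toFinset)).card :=
          Finset.card_le_card hcover
      _ ≤ ∑ E ∈ C, (Set.toFinite E).toFinset.card := Finset.card_biUnion_le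
      _ ≤ C.card * n := Finset.sum_le_card_nsmul C _ n
            (fun E hE => hbig E (hCS.1 hE))
  have hn : n < C.card := by
    have : n * n < C.card * n := by
      calc n * n = n ^ 2 := (sq n).symm
        _ < Fintype.card V := hcard
        _ ≤ C.card * n := h2
    exact Nat.lt_of_mul_lt_mul_right this
  refine ⟨D, ↑C, hCS.1, by omega, ?_⟩
  intro v hv
  rw [hD, Finset.mem_image] at hv
  obtain ⟨⟨E, hE⟩, -, rfl⟩ := hv
  refine ⟨E, ⟨hE, hg1 E hE⟩, ?_⟩
  rintro F ⟨hF, hvF⟩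
  exact hg2 E hE F hF hvF
end

section
/- Let (V, H) be a hypergraph (V possibly infinite) with no isolated vertices and |V| > n² (in the sense that V has a finite subset of size greater than n²). Then (V, H) contains a partition of size greater than n. -/
theorem hypergraph_partition {V : Type*} (H : Set (Set V)) (n : ℕ)
    (hno : ∀ v : V, ∃ E ∈ H, v ∈ E) (hcard : ∃ W : Finset V, W.card > n ^ 2) :
    ∃ (D : Finset V) (P : Set (Set V)), P ⊆ H ∧ D.card > n ∧
      ∀ v ∈ D, ∃! E, E ∈ P ∧ v ∈ E := by
  classical
  obtain ⟨W, hW⟩ := hcard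
  by_cases hbig : ∃ E ∈ H, n < (W.filter (· ∈ E)).card
  · obtain ⟨E, hE, hc⟩ := hbig
    refine ⟨W.filter (· ∈ E), {E}, by simpa using hE, hc, ?_⟩
    intro v hv
    refine ⟨E, ⟨rfl, (Finset.mem_filter.mp hv).2⟩, ?_⟩
    rintro F ⟨rfl, -⟩; rfl
  push_neg at hbig
  choose f hfH hfm using hno
  set Q : Finset (Set V) := W.image f with hQdef
  have hQH : ∀ E ∈ Q, E ∈ H := by
    intro E hE
    obtain ⟨v, -, rfl⟩ := Finset.mem_image.mp hE
    exact hfH v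
  have hcov : ∀ v ∈ W, ∃ E ∈ Q, v ∈ E := fun v hv =>
    ⟨f v, Finset.mem_image_of_mem f hv, hfm v⟩
  have hne : (Q.powerset.filter (fun Q' => ∀ v ∈ W, ∃ E ∈ Q', v ∈ E)).Nonempty :=
    ⟨Q, Finset.mem_filter.mpr ⟨Finset.mem_powerset.mpr le_rfl, hcov⟩⟩
  obtain ⟨Q', hQ'mem, hQ'min⟩ :=
    (Q.powerset.filter (fun Q' => ∀ v ∈ W, ∃ E ∈ Q', v ∈ E)).exists_min_image
      Finset.card hne
  rw [Finset.mem_filter, Finset.mem_powerset] at hQ'mem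
  obtain ⟨hQ'sub, hQ'cov⟩ := hQ'mem
  -- private vertices
  have hpriv : ∀ E ∈ Q', ∃ w, w ∈ W ∧ w ∈ E ∧ ∀ E' ∈ Q', w ∈ E' → E' = E := by
    intro E hE
    by_contra h
    push_neg at h
    have hcov' : ∀ v ∈ W, ∃ F ∈ Q'.erase E, v ∈ F := by
      intro v hv
      obtain ⟨F, hF, hvF⟩ := hQ'cov v hv
      by_cases hFE : F = E
      · subst hFE
        obtain ⟨E', hE', hvE', hneq⟩ := h v hv hvF
        exact ⟨E', Finset.mem_erase.mpr ⟨hneq, hE'⟩, hvE'⟩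
      · exact ⟨F, Finset.mem_erase.mpr ⟨hFE, hF⟩, hvF⟩
    have hmem : Q'.erase E ∈ Q.powerset.filter (fun Q' => ∀ v ∈ W, ∃ E ∈ Q', v ∈ E) :=
      Finset.mem_filter.mpr
        ⟨Finset.mem_powerset.mpr ((Finset.erase_subset _ _).trans hQ'sub), hcov'⟩
    have h1 := hQ'min (Q'.erase E) hmem
    have h2 : (Q'.erase E).card < Q'.card := Finset.card_erase_lt_of_mem hE
    omega
  choose w hwW hwE hwuniq using hpriv
  -- card bound: W covered by Q' pieces of size ≤ n
  have hWsub : W ⊆ Q'.biUnion (fun E => W.filter (· ∈ E)) := by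
    intro v hv
    obtain ⟨E, hE, hvE⟩ := hQ'cov v hv
    exact Finset.mem_biUnion.mpr ⟨E, hE, Finset.mem_filter.mpr ⟨hv, hvE⟩⟩
  have hWle : W.card ≤ Q'.card * n := by
    calc W.card ≤ (Q'.biUnion (fun E => W.filter (· ∈ E))).card :=
          Finset.card_le_card hWsub
      _ ≤ ∑ E ∈ Q', (W.filter (· ∈ E)).card := Finset.card_biUnion_le
      _ ≤ ∑ _E ∈ Q', n := Finset.sum_le_sum (fun E hE => hbig E (hQH E (hQ'sub hE)))
      _ = Q'.card * n := by rw [Finset.sum_const, smul_eq_mul]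
  have hQ'card : n < Q'.card := by
    by_contra h
    push_neg at h
    have : W.card ≤ n * n := le_trans hWle (Nat.mul_le_mul_right n h)
    have := hW
    nlinarith [sq_nonneg n, pow_two n]
  set D : Finset V := Q'.attach.image (fun E => w E.1 E.2) with hDdef
  have hinj : ∀ (a : {x // x ∈ Q'}), ∀ (b : {x // x ∈ Q'}),
      w a.1 a.2 = w b.1 b.2 → a = b := by
    rintro ⟨E, hE⟩ ⟨E', hE'⟩ h
    have : w E hE ∈ E' := h ▸ hwE E' hE'
    exact Subtype.ext (hwuniq E hE E' hE' this).symm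
  have hDcard : D.card = Q'.card := by
    rw [hDdef, Finset.card_image_of_injective _ (fun a b => hinj a b),
      Finset.card_attach]
  refine ⟨D, ↑Q', fun E hE => hQH E (hQ'sub hE), by omega, ?_⟩
  intro v hv
  obtain ⟨⟨E, hE⟩, -, rfl⟩ := Finset.mem_image.mp hv
  refine ⟨E, ⟨hE, hwE E hE⟩, ?_⟩
  rintro F ⟨hF, hvF⟩
  exact hwuniq E hE F hF hvF
end

section
/- Let (V, H) be a finite economical hypergraph. Then the map sending each hyperedge E ∈ H to some vertex isolated in (V, H \ {E}) is injective; in particular |H| ≤ |V|. -/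
theorem economical_choice_injective {V : Type*} [Fintype V] (H : Set (Set V))
    (hno : ∀ v : V, ∃ E ∈ H, v ∈ E)
    (hecon : ∀ E ∈ H, ∃ v : V, ∀ F ∈ H \ {E}, v ∉ F)
    (f : Set V → V) (hf : ∀ E ∈ H, ∀ F ∈ H \ {E}, f E ∉ F) :
    Set.InjOn f H ∧ H.ncard ≤ Fintype.card V := by
  have hmem : ∀ E ∈ H, f E ∈ E := by
    intro E hE
    obtain ⟨F, hF, hfF⟩ := hno (f E)
    by_cases h : F = E
    · exact h ▸ hfF
    · exact absurd hfF (hf E hE F ⟨hF, h⟩)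
  have hinj : Set.InjOn f H := by
    intro E hE F hF hEF
    by_contra hne
    exact hf E hE F ⟨hF, fun h => hne ((Set.mem_singleton_iff.mp h) ▸ rfl)⟩ (hEF ▸ hmem F hF)
  refine ⟨hinj, ?_⟩
  have hHfin : H.Finite := Set.toFinite H
  calc H.ncard = (f '' H).ncard := (Set.ncard_image_of_injOn hinj).symm
    _ ≤ (Set.univ : Set V).ncard := Set.ncard_le_ncard (Set.subset_univ _) Set.finite_univ
    _ = Fintype.card V := by simp [Set.ncard_univ]
end

section
/- Let (V, H) be a finite economical hypergraph containing no partition of size greater than n. Then |H| ≤ n, and every hyperedge E ∈ H satisfies |E| ≤ n. -/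
theorem economical_no_large_partition_bounds {V : Type*} [Fintype V] (H : Set (Set V)) (n : ℕ)
    (hno : ∀ v : V, ∃ E ∈ H, v ∈ E)
    (hecon : ∀ E ∈ H, ∃ v : V, ∀ F ∈ H \ {E}, v ∉ F)
    (hpart : ¬ ∃ (D : Finset V) (P : Set (Set V)), P ⊆ H ∧ D.card > n ∧
      ∀ v ∈ D, ∃! E, E ∈ P ∧ v ∈ E) :
    H.ncard ≤ n ∧ ∀ E ∈ H, E.ncard ≤ n := by
  classical
  choose f hf using hecon
  have hmem : ∀ E (hE : E ∈ H), f E hE ∈ E := by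
    intro E hE
    obtain ⟨F, hF, hvF⟩ := hno (f E hE)
    by_cases h : F = E
    · subst h; exact hvF
    · exact absurd hvF (hf E hE F ⟨hF, h⟩)
  set g : H → V := fun E => f E.1 E.2 with hg
  have hginj : Function.Injective g := by
    intro E F h
    apply Subtype.ext
    by_contra hne
    have : g F ∉ E.1 := hf F.1 F.2 E.1 ⟨E.2, fun hEq => hne (by simpa using hEq)⟩
    exact this (h ▸ hmem E.1 E.2)
  constructor
  · by_contra hlt
    push_neg at hlt
    apply hpart
    refine ⟨(Set.range g).toFinset, H, le_refl _, ?_, ?_⟩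
    · rwa [Set.toFinset_card, Fintype.card_eq_nat_card,
        Nat.card_range_of_injective hginj, Nat.card_coe_set_eq]
    · intro v hv
      rw [Set.mem_toFinset, Set.mem_range] at hv
      obtain ⟨E, hE⟩ := hv
      subst hE
      refine ⟨E.1, ⟨E.2, hmem E.1 E.2⟩, ?_⟩
      rintro F ⟨hF, hvF⟩
      by_contra hne
      exact hf E.1 E.2 F ⟨hF, hne⟩ hvF
  · intro E hE
    by_contra hlt
    push_neg at hlt
    apply hpart
    refine ⟨E.toFinset, {E}, by simpa using hE, ?_, ?_⟩
    · rwa [Set.toFinset_card, Fintype.card_eq_nat_card, Nat.card_coe_set_eq]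
    · intro v hv
      rw [Set.mem_toFinset] at hv
      exact ⟨E, ⟨rfl, hv⟩, fun F hF => hF.1⟩
end

section
/- Let (V, H) be a finite economical hypergraph containing no partition of size greater than n. Then |V| ≤ Σ_{k=1}^{n} n/k (where the sum is over real numbers). -/
open Finset

/-- Key lemma: if a finite family `𝓗` of sets admits no "partial partition" with more than
`n` vertices, then the union of the family has at most `n * (1 + 1/2 + ⋯ + 1/m)` elements,
where `m = 𝓗.card`.  Proof: induction on `m`, removing the edge whose exclusive vertex set
is smallest (the exclusive sets are pairwise disjoint and their union is a partial
partition, so the smallest one has size at most `n/m`). -/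
lemma econ_aux {V : Type*} [Fintype V] [DecidableEq V] (n : ℕ) :
    ∀ (m : ℕ) (𝓗 : Finset (Set V)), 𝓗.card = m →
    (∀ (D : Finset V) (P : Set (Set V)), P ⊆ ↑𝓗 →
      (∀ v ∈ D, ∃! E, E ∈ P ∧ v ∈ E) → D.card ≤ n) →
    ((𝓗.biUnion (fun E => (Set.toFinite E).toFinset)).card : ℝ) ≤
      ∑ k ∈ Finset.Icc 1 m, (n : ℝ) / k := by
  classical
  intro m
  induction m with
  | zero =>
      intro 𝓗 hcard _
      rw [Finset.card_eq_zero] at hcard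
      subst hcard
      simp
  | succ m ih =>
      intro 𝓗 hcard hpart
      set T : Set V → Finset V := fun E => (Set.toFinite E).toFinset with hT
      have hmemT : ∀ (E : Set V) (v : V), v ∈ T E ↔ v ∈ E := by
        intro E v
        show v ∈ (Set.toFinite E).toFinset ↔ v ∈ E
        exact Set.Finite.mem_toFinset _
      set X : Set V → Finset V := fun E => T E \ ((𝓗.erase E).biUnion T) with hX
      have hmemX : ∀ (E : Set V) (v : V),
          v ∈ X E ↔ v ∈ E ∧ ∀ F ∈ 𝓗, F ≠ E → v ∉ F := by
        intro E v
        simp only [hX, Finset.mem_sdiff, Finset.mem_biUnion, Finset.mem_erase, hmemT]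
        constructor
        · rintro ⟨hvE, hnot⟩
          exact ⟨hvE, fun F hF hne hvF => hnot ⟨F, ⟨hne, hF⟩, hvF⟩⟩
        · rintro ⟨hvE, hall⟩
          refine ⟨hvE, ?_⟩
          rintro ⟨F, ⟨hne, hF⟩, hvF⟩
          exact hall F hF hne hvF
      have hne : 𝓗.Nonempty := by
        rw [← Finset.card_pos, hcard]; exact Nat.succ_pos m
      -- the exclusive sets are pairwise disjoint
      have hdisj : ∀ E ∈ 𝓗, ∀ F ∈ 𝓗, E ≠ F → Disjoint (X E) (X F) := by
        intro E hE F hF hEF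
        rw [Finset.disjoint_left]
        intro v hvE hvF
        have h1 := (hmemX E v).1 hvE
        have h2 := (hmemX F v).1 hvF
        exact (h2.2 E hE hEF) h1.1
      -- the union of the exclusive sets is a partial partition, hence has card ≤ n
      have hsum : ∑ E ∈ 𝓗, (X E).card ≤ n := by
        rw [← Finset.card_biUnion hdisj]
        apply hpart (𝓗.biUnion X) ↑𝓗 subset_rfl
        intro v hv
        rcases Finset.mem_biUnion.1 hv with ⟨E, hE, hvE⟩
        have h1 := (hmemX E v).1 hvE
        refine ⟨E, ⟨Finset.mem_coe.2 hE, h1.1⟩, ?_⟩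
        rintro F ⟨hF, hvF⟩
        by_contra hne'
        exact h1.2 F (Finset.mem_coe.1 hF) hne' hvF
      -- pigeonhole: some edge has a small exclusive set
      obtain ⟨E₀, hE₀, hmin⟩ :=
        Finset.exists_min_image 𝓗 (fun E => (X E).card) hne
      have hpig : (m + 1) * (X E₀).card ≤ n := by
        calc (m + 1) * (X E₀).card = ∑ _E ∈ 𝓗, (X E₀).card := by
              rw [Finset.sum_const, hcard, smul_eq_mul]
          _ ≤ ∑ E ∈ 𝓗, (X E).card := Finset.sum_le_sum (fun E hE => hmin E hE)
          _ ≤ n := hsum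
      -- induction hypothesis applies to 𝓗.erase E₀
      have hcard' : (𝓗.erase E₀).card = m := by
        rw [Finset.card_erase_of_mem hE₀, hcard]
        omega
      have hpart' : ∀ (D : Finset V) (P : Set (Set V)), P ⊆ ↑(𝓗.erase E₀) →
          (∀ v ∈ D, ∃! E, E ∈ P ∧ v ∈ E) → D.card ≤ n := by
        intro D P hP hD
        refine hpart D P (hP.trans ?_) hD
        intro E hE
        simp only [Finset.coe_erase, Set.mem_diff] at hE
        exact hE.1
      have IH := ih (𝓗.erase E₀) hcard' hpart'
      -- split the union
      have hsplit : 𝓗.biUnion T = ((𝓗.erase E₀).biUnion T) ∪ X E₀ := by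
        ext v
        simp only [Finset.mem_union, Finset.mem_biUnion, hmemT]
        constructor
        · rintro ⟨E, hE, hvE⟩
          by_cases hc : ∃ F ∈ 𝓗.erase E₀, v ∈ F
          · rcases hc with ⟨F, hF, hvF⟩
            exact Or.inl ⟨F, hF, hvF⟩
          · push_neg at hc
            right
            have hEeq : E = E₀ := by
              by_contra hne'
              exact (hc E (Finset.mem_erase.2 ⟨hne', hE⟩)) hvE
            subst hEeq
            refine (hmemX E v).2 ⟨hvE, fun F hF hne' hvF => ?_⟩
            exact (hc F (Finset.mem_erase.2 ⟨hne', hF⟩)) hvF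
        · rintro (⟨F, hF, hvF⟩ | hvX)
          · exact ⟨F, Finset.mem_of_mem_erase hF, hvF⟩
          · exact ⟨E₀, hE₀, ((hmemX E₀ v).1 hvX).1⟩
      have hdisj' : Disjoint ((𝓗.erase E₀).biUnion T) (X E₀) := by
        rw [Finset.disjoint_right]
        intro v hvX hvU
        rcases Finset.mem_biUnion.1 hvU with ⟨F, hF, hvF⟩
        have h1 := (hmemX E₀ v).1 hvX
        rcases Finset.mem_erase.1 hF with ⟨hneF, hFmem⟩
        exact h1.2 F hFmem hneF ((hmemT F v).1 hvF)
      have hcards : (𝓗.biUnion T).card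
          = ((𝓗.erase E₀).biUnion T).card + (X E₀).card := by
        rw [hsplit, Finset.card_union_of_disjoint hdisj']
      -- the small exclusive set has real size ≤ n / (m+1)
      have hXle : ((X E₀).card : ℝ) ≤ (n : ℝ) / (m + 1) := by
        rw [le_div_iff₀ (by positivity : (0:ℝ) < (m:ℝ) + 1)]
        calc ((X E₀).card : ℝ) * ((m:ℝ) + 1) = (((m+1) * (X E₀).card : ℕ) : ℝ) := by
              push_cast; ring
          _ ≤ (n : ℝ) := by exact_mod_cast hpig
      have hsumsucc : ∑ k ∈ Finset.Icc 1 (m+1), (n : ℝ) / k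
          = (∑ k ∈ Finset.Icc 1 m, (n : ℝ) / k) + (n : ℝ) / (m+1) := by
        rw [Finset.sum_Icc_succ_top (by omega : 1 ≤ m + 1)]
        push_cast
        ring
      rw [hsumsucc]
      calc ((𝓗.biUnion T).card : ℝ)
          = (((𝓗.erase E₀).biUnion T).card : ℝ) + ((X E₀).card : ℝ) := by
            rw [hcards]; push_cast; ring
        _ ≤ (∑ k ∈ Finset.Icc 1 m, (n : ℝ) / k) + (n : ℝ) / (m+1) :=
            add_le_add IH hXle

theorem economical_vertex_bound {V : Type*} [Fintype V] (H : Set (Set V)) (n : ℕ)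
    (hno : ∀ v : V, ∃ E ∈ H, v ∈ E)
    (hecon : ∀ E ∈ H, ∃ v : V, ∀ F ∈ H \ {E}, v ∉ F)
    (hpart : ¬ ∃ (D : Finset V) (P : Set (Set V)), P ⊆ H ∧ D.card > n ∧
      ∀ v ∈ D, ∃! E, E ∈ P ∧ v ∈ E) :
    (Fintype.card V : ℝ) ≤ ∑ k ∈ Finset.Icc 1 n, (n : ℝ) / k := by
  classical
  -- partial partitions have size at most n
  have hpart' : ∀ (D : Finset V) (P : Set (Set V)), P ⊆ H →
      (∀ v ∈ D, ∃! E, E ∈ P ∧ v ∈ E) → D.card ≤ n := by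
    intro D P hP hD
    by_contra hgt
    exact hpart ⟨D, P, hP, Nat.lt_of_not_le hgt, hD⟩
  set 𝓗 : Finset (Set V) := (Set.toFinite H).toFinset with h𝓗
  have hmem𝓗 : ∀ E : Set V, E ∈ 𝓗 ↔ E ∈ H := by
    intro E
    show E ∈ (Set.toFinite H).toFinset ↔ E ∈ H
    exact Set.Finite.mem_toFinset _
  -- each edge has a private vertex belonging to it
  have hpriv : ∀ E ∈ H, ∃ v : V, v ∈ E ∧ ∀ F ∈ H, F ≠ E → v ∉ F := by
    intro E hE
    obtain ⟨v, hv⟩ := hecon E hE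
    have hv' : ∀ F ∈ H, F ≠ E → v ∉ F := by
      intro F hF hne
      exact hv F ⟨hF, by simpa using hne⟩
    obtain ⟨F, hF, hvF⟩ := hno v
    have hFE : F = E := by
      by_contra hne
      exact hv' F hF hne hvF
    exact ⟨v, hFE ▸ hvF, hv'⟩
  -- the number of edges is at most n: the private vertices form a partial partition
  choose p hp1 hp2 using hpriv
  have hm : 𝓗.card ≤ n := by
    have hinj : Function.Injective
        (fun E : {E : Set V // E ∈ 𝓗} => p E.1 ((hmem𝓗 E.1).1 E.2)) := by
      rintro ⟨E, hE⟩ ⟨F, hF⟩ heq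
      simp only at heq
      by_contra hne
      have hne' : E ≠ F := fun h => hne (by simpa using h)
      have h1 : p E ((hmem𝓗 E).1 hE) ∈ E := hp1 E ((hmem𝓗 E).1 hE)
      have h2 := hp2 F ((hmem𝓗 F).1 hF) E ((hmem𝓗 E).1 hE) hne'
      rw [heq] at h1
      exact h2 h1
    have hcardD : (𝓗.attach.image
        (fun E : {E : Set V // E ∈ 𝓗} => p E.1 ((hmem𝓗 E.1).1 E.2))).card
        = 𝓗.card := by
      rw [Finset.card_image_of_injective _ hinj, Finset.card_attach]
    rw [← hcardD]
    apply hpart' _ H subset_rfl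
    intro v hv
    rcases Finset.mem_image.1 hv with ⟨⟨E, hE⟩, _, hveq⟩
    have hEH : E ∈ H := (hmem𝓗 E).1 hE
    refine ⟨E, ⟨hEH, hveq ▸ hp1 E hEH⟩, ?_⟩
    rintro F ⟨hFH, hvF⟩
    by_contra hne
    exact hp2 E hEH F hFH hne (hveq ▸ hvF)
  -- every vertex is covered
  have hcover : Finset.univ ⊆ 𝓗.biUnion (fun E => (Set.toFinite E).toFinset) := by
    intro v _
    obtain ⟨E, hE, hvE⟩ := hno v
    exact Finset.mem_biUnion.2 ⟨E, (hmem𝓗 E).2 hE, (Set.Finite.mem_toFinset _).2 hvE⟩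
  have hcardV : (Fintype.card V : ℝ)
      ≤ ((𝓗.biUnion (fun E => (Set.toFinite E).toFinset)).card : ℝ) := by
    exact_mod_cast Finset.card_le_card hcover
  have hkey := econ_aux n 𝓗.card 𝓗 rfl (by
    intro D P hP hD
    refine hpart' D P ?_ hD
    intro E hE
    exact (hmem𝓗 E).1 (Finset.mem_coe.1 (hP hE)))
  have hmono : ∑ k ∈ Finset.Icc 1 𝓗.card, (n : ℝ) / k
      ≤ ∑ k ∈ Finset.Icc 1 n, (n : ℝ) / k := by
    apply Finset.sum_le_sum_of_subset_of_nonneg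
    · exact Finset.Icc_subset_Icc_right hm
    · intro k _ _
      positivity
  linarith
end

section
/- For all natural numbers n ≥ 1 and 1 ≤ k ≤ n: Σ_{j=k-1}^{n-1} C(n-k, j-k+1) / C(n-1, j) = n/k, where C denotes the binomial coefficient and the identity is among rational numbers. -/
theorem binom_ratio_sum (n k : ℕ) (hn : 1 ≤ n) (hk1 : 1 ≤ k) (hk2 : k ≤ n) :
    ∑ j ∈ Finset.Icc (k - 1) (n - 1),
        ((n - k).choose (j + 1 - k) : ℚ) / ((n - 1).choose j : ℚ) = (n : ℚ) / k := by
  have hd : ((n - 1).choose (k - 1) : ℚ) ≠ 0 := by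
    exact_mod_cast Nat.choose_pos (by omega) |>.ne'
  have hstep : ∀ j ∈ Finset.Icc (k - 1) (n - 1),
      ((n - k).choose (j + 1 - k) : ℚ) / ((n - 1).choose j : ℚ)
        = (j.choose (k - 1) : ℚ) / ((n - 1).choose (k - 1) : ℚ) := by
    intro j hj
    simp only [Finset.mem_Icc] at hj
    have hb : ((n - 1).choose j : ℚ) ≠ 0 := by
      exact_mod_cast (Nat.choose_pos hj.2).ne'
    rw [div_eq_div_iff hb hd]
    have := Nat.choose_mul (n := n - 1) (k := j) (s := k - 1) hj.1
    have h1 : n - 1 - (k - 1) = n - k := by omega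
    have h2 : j - (k - 1) = j + 1 - k := by omega
    rw [h1, h2] at this
    have := congrArg (Nat.cast : ℕ → ℚ) this; push_cast at this; linarith [this]
  rw [Finset.sum_congr rfl hstep, ← Finset.sum_div]
  have hsum : ∑ j ∈ Finset.Icc (k - 1) (n - 1), (j.choose (k - 1) : ℚ)
      = (n.choose k : ℚ) := by
    rw [← Nat.cast_sum]
    norm_cast
    rw [Nat.sum_Icc_choose]
    congr 1 <;> omega
  rw [hsum]
  rw [div_eq_div_iff hd (by exact_mod_cast hk1.trans_lt' Nat.zero_lt_one |>.ne')]
  · have := Nat.add_one_mul_choose_eq (n - 1) (k - 1)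
    have h1 : n - 1 + 1 = n := by omega
    have h2 : k - 1 + 1 = k := by omega
    rw [h1, h2] at this
    exact_mod_cast this.symm
end

section
/- For every natural number n ≥ 1, the n-th harmonic number H_n = Σ_{k=1}^n 1/k satisfies H_n < ln n + γ + 1/(2n), where γ is the Euler–Mascheroni constant. -/
open Real Filter Topology

lemma log_lt_half_sub_inv {y : ℝ} (hy : 1 < y) : Real.log y < (y - y⁻¹) / 2 := by
  have key : StrictMonoOn (fun y : ℝ => (y - y⁻¹) / 2 - Real.log y) (Set.Ici 1) := by
    apply strictMonoOn_of_deriv_pos (convex_Ici 1)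
    · refine ContinuousOn.sub (ContinuousOn.div_const (continuousOn_id.sub ?_) 2) ?_
      · exact continuousOn_id.inv₀ (fun x hx => by
          have : (1:ℝ) ≤ x := hx
          positivity)
      · exact Real.continuousOn_log.mono (fun x hx => by
          have : (1:ℝ) ≤ x := hx
          simp only [Set.mem_compl_iff, Set.mem_singleton_iff]
          intro h; rw [h] at this; norm_num at this)
    · intro x hx
      rw [interior_Ici] at hx
      have hx0 : (0:ℝ) < x := lt_trans one_pos hx
      have h1 : HasDerivAt (fun y : ℝ => (y - y⁻¹) / 2 - Real.log y)
          ((1 - (-(x^2)⁻¹)) / 2 - x⁻¹) x :=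
        (((hasDerivAt_id x).sub (hasDerivAt_inv hx0.ne')).div_const 2).sub
          (Real.hasDerivAt_log hx0.ne')
      rw [h1.deriv]
      have he : (1 - -(x ^ 2)⁻¹) / 2 - x⁻¹ = (x - 1)^2 / (2 * x^2) := by
        field_simp; ring
      rw [he]
      have hx1 : (1:ℝ) < x := hx
      have h2 : (0:ℝ) < (x - 1)^2 := pow_pos (by linarith) 2
      positivity
  have := key (Set.self_mem_Ici) (Set.mem_Ici.2 hy.le) hy
  simpa using this

lemma aux_strictMono : StrictMono (fun n : ℕ => (harmonic n : ℝ) - Real.log n - 1 / (2 * n)) := by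
  apply strictMono_nat_of_lt_succ
  intro n
  rcases Nat.eq_zero_or_pos n with rfl | hn
  · norm_num [harmonic_succ]
  have hn0 : (0:ℝ) < n := by exact_mod_cast hn
  have hy : (1:ℝ) < (n+1)/n := by
    rw [lt_div_iff₀ hn0]; linarith
  have hlog := log_lt_half_sub_inv hy
  rw [Real.log_div (by positivity) hn0.ne', inv_div] at hlog
  have e1 : (((n:ℝ)+1)/n - n/(n+1))/2 = 1/(n+1) + 1/(2*n) - 1/(2*(n+1)) := by
    field_simp; ring
  rw [e1] at hlog
  simp only [harmonic_succ, Rat.cast_add, Rat.cast_inv, Rat.cast_natCast, Nat.cast_add,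
    Nat.cast_one]
  push_cast
  have hi : ((n:ℝ)+1)⁻¹ = 1/((n:ℝ)+1) := (one_div _).symm
  rw [hi]
  linarith

theorem harmonic_lt_log_add_gamma (n : ℕ) (hn : 1 ≤ n) :
    ∑ k ∈ Finset.Icc 1 n, (1 : ℝ) / k
      < Real.log n + Real.eulerMascheroniConstant + 1 / (2 * n) := by
  have hsum : ∑ k ∈ Finset.Icc 1 n, (1 : ℝ) / k = (harmonic n : ℝ) := by
    rw [harmonic_eq_sum_Icc]
    push_cast
    simp [one_div]
  have htend : Tendsto (fun n : ℕ => (harmonic n : ℝ) - Real.log n - 1 / (2 * n)) atTop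
      (𝓝 Real.eulerMascheroniConstant) := by
    have h2 : Tendsto (fun n : ℕ => 1 / (2 * (n:ℝ))) atTop (𝓝 0) := by
      exact (tendsto_const_div_atTop_nhds_zero_nat ((1:ℝ)/2)).congr
        (fun m => div_div (1:ℝ) 2 (m:ℝ))
    simpa using Real.tendsto_harmonic_sub_log.sub h2
  have hle := aux_strictMono.monotone.ge_of_tendsto htend (n+1)
  have hlt := aux_strictMono (Nat.lt_succ_self n)
  rw [hsum]
  push_cast at hle hlt ⊢
  linarith
end

section
/- Let (a^i)_{i ∈ ℕ} be a countable family of conditionally convergent series of real numbers, and fix i ∈ ℕ. Then there exists a set A ⊆ ℕ such that Σ_{n ∈ A} a^i_n = +∞, and A is tame with respect to the family: for each j ∈ ℕ, all but finitely many of the nonzero terms a^j_n with n ∈ A have the same sign. -/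
open Filter

/-- A series is conditionally convergent. -/
def CondConv (a : ℕ → ℝ) : Prop :=
  (∃ L : ℝ, Tendsto (fun N => ∑ n ∈ Finset.range N, a n) atTop (nhds L)) ∧
    ¬ ∃ L : ℝ, Tendsto (fun N => ∑ n ∈ Finset.range N, |a n|) atTop (nhds L)


open ENNReal

lemma tsum_ofReal_top (b : ℕ → ℝ) (hb : CondConv b) :
    ∑' n, ENNReal.ofReal (b n) = ⊤ := by
  by_contra h
  have hs : Summable (fun n => (ENNReal.ofReal (b n)).toReal) := ENNReal.summable_toReal h
  have heq : ∀ n, (ENNReal.ofReal (b n)).toReal = max (b n) 0 := by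
    intro n
    rcases le_total 0 (b n) with h' | h'
    · rw [ENNReal.toReal_ofReal h', max_eq_left h']
    · rw [ENNReal.ofReal_eq_zero.mpr h', max_eq_right h']; simp
  rw [funext heq] at hs
  have h1 := hs.hasSum.tendsto_sum_nat
  obtain ⟨L, hL⟩ := hb.1
  refine hb.2 ⟨2 * (∑' n, max (b n) 0) - L, ?_⟩
  have habs : ∀ N, ∑ n ∈ Finset.range N, |b n|
      = 2 * (∑ n ∈ Finset.range N, max (b n) 0) - ∑ n ∈ Finset.range N, b n := by
    intro N
    rw [Finset.mul_sum, ← Finset.sum_sub_distrib]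
    refine Finset.sum_congr rfl fun n _ => ?_
    rcases le_total 0 (b n) with h' | h'
    · rw [abs_of_nonneg h', max_eq_left h']; ring
    · rw [abs_of_nonpos h', max_eq_right h']; ring
  simp only [habs]
  exact ((h1.const_mul 2).sub hL)


lemma chunk (b : ℕ → ℝ) (S : Set ℕ) (hS : S ⊆ {n | 0 < b n})
    (htop : ∑' n, S.indicator (fun n => ENNReal.ofReal (b n)) n = ⊤) (G : Finset ℕ) :
    ∃ F : Finset ℕ, ↑F ⊆ S ∧ (∀ n ∈ F, n ∉ G) ∧ 1 ≤ ∑ n ∈ F, b n := by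
  classical
  set f : ℕ → ℝ≥0∞ := fun n => ENNReal.ofReal (b n) with hf
  have hfin : ∑' n, (↑G : Set ℕ).indicator f n ≠ ⊤ := by
    have hsum : ∑' n, (↑G : Set ℕ).indicator f n = ∑ n ∈ G, (↑G : Set ℕ).indicator f n :=
      tsum_eq_sum (fun n hn => Set.indicator_of_notMem (fun h => hn (Finset.mem_coe.mp h)) f)
    rw [hsum]
    refine (ENNReal.sum_lt_top.mpr fun n _ => ?_).ne
    exact lt_of_le_of_lt (Set.indicator_le_self _ _ n) ENNReal.ofReal_lt_top
  have hfin' : ∑' n, (↑G : Set ℕ).indicator f n ≠ ⊤ := hfin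
  have htop' : ∑' n, (S \ ↑G).indicator f n = ⊤ := by
    by_contra h
    have hle : ∀ n, S.indicator f n ≤ (S \ ↑G).indicator f n + (↑G : Set ℕ).indicator f n := by
      intro n
      by_cases hn : n ∈ S
      · have h1 : S.indicator f n = f n := Set.indicator_of_mem hn f
        by_cases hg : n ∈ G
        · have h2 : (↑G : Set ℕ).indicator f n = f n :=
            Set.indicator_of_mem (Finset.mem_coe.mpr hg) f
          rw [h1, h2]; exact le_add_self
        · have h2 : (S \ ↑G).indicator f n = f n :=
            Set.indicator_of_mem (show n ∈ S \ ↑G from ⟨hn, fun h => hg (Finset.mem_coe.mp h)⟩) f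
          rw [h1, h2]; exact le_self_add
      · have h1 : S.indicator f n = 0 := Set.indicator_of_notMem hn f
        rw [h1]; exact zero_le
    have hh := (Summable.tsum_le_tsum hle ENNReal.summable ENNReal.summable).trans_eq ENNReal.tsum_add
    rw [htop] at hh
    exact (ENNReal.add_ne_top.mpr ⟨h, hfin'⟩) (top_le_iff.mp hh)
  rw [ENNReal.tsum_eq_iSup_sum] at htop'
  have h1 : (1 : ℝ≥0∞) < ⨆ s : Finset ℕ, ∑ n ∈ s, (S \ ↑G).indicator f n := by
    rw [htop']; exact ENNReal.one_lt_top
  obtain ⟨F₀, hF₀⟩ := lt_iSup_iff.mp h1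
  refine ⟨F₀.filter (· ∈ S \ (↑G : Set ℕ)), ?_, ?_, ?_⟩
  · intro n hn; exact ((Finset.mem_filter.mp (Finset.mem_coe.mp hn)).2).1
  · intro n hn hg; exact ((Finset.mem_filter.mp hn).2).2 (Finset.mem_coe.mpr hg)
  · have hsum : ∑ n ∈ F₀, (S \ ↑G).indicator f n
        = ∑ n ∈ F₀.filter (· ∈ S \ (↑G : Set ℕ)), f n := by
      rw [Finset.sum_filter]
      exact Finset.sum_congr rfl fun n _ => by rw [Set.indicator_apply]
    rw [hsum] at hF₀
    have hnonneg : ∀ n ∈ F₀.filter (· ∈ S \ (↑G : Set ℕ)), 0 ≤ b n :=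
      fun n hn => (hS ((Finset.mem_filter.mp hn).2.1)).le
    rw [hf] at hF₀
    rw [← ENNReal.ofReal_sum_of_nonneg hnonneg] at hF₀
    by_contra hlt
    push_neg at hlt
    have h2 := ENNReal.ofReal_le_ofReal hlt.le
    rw [ENNReal.ofReal_one] at h2
    exact absurd (hF₀.trans_le h2) (lt_irrefl _)

lemma split (b : ℕ → ℝ) (S : Set ℕ)
    (htop : ∑' n, S.indicator (fun n => ENNReal.ofReal (b n)) n = ⊤) (c : ℕ → ℝ) :
    ∃ T : Set ℕ, T ⊆ S ∧ (∑' n, T.indicator (fun n => ENNReal.ofReal (b n)) n = ⊤) ∧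
      ((∀ n ∈ T, 0 ≤ c n) ∨ (∀ n ∈ T, c n ≤ 0)) := by
  classical
  set f : ℕ → ℝ≥0∞ := fun n => ENNReal.ofReal (b n)
  have hpt : ∀ n, S.indicator f n
      = (S ∩ {n | 0 ≤ c n}).indicator f n + (S ∩ {n | c n < 0}).indicator f n := by
    intro n
    by_cases hn : n ∈ S
    · have h1 : S.indicator f n = f n := Set.indicator_of_mem hn f
      rcases le_or_gt 0 (c n) with h' | h'
      · have h2 : (S ∩ {n | 0 ≤ c n}).indicator f n = f n :=
          Set.indicator_of_mem (show n ∈ S ∩ _ from ⟨hn, h'⟩) f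
        have h3 : (S ∩ {n | c n < 0}).indicator f n = 0 :=
          Set.indicator_of_notMem (fun h => absurd h.2 (not_lt.mpr h')) f
        rw [h1, h2, h3, add_zero]
      · have h2 : (S ∩ {n | 0 ≤ c n}).indicator f n = 0 :=
          Set.indicator_of_notMem (fun h => absurd h.2 (not_le.mpr h')) f
        have h3 : (S ∩ {n | c n < 0}).indicator f n = f n :=
          Set.indicator_of_mem (show n ∈ S ∩ _ from ⟨hn, h'⟩) f
        rw [h1, h2, h3, zero_add]
    · have h1 : S.indicator f n = 0 := Set.indicator_of_notMem hn f
      have h2 : (S ∩ {n | 0 ≤ c n}).indicator f n = 0 :=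
        Set.indicator_of_notMem (fun h => hn h.1) f
      have h3 : (S ∩ {n | c n < 0}).indicator f n = 0 :=
        Set.indicator_of_notMem (fun h => hn h.1) f
      rw [h1, h2, h3, add_zero]
  rw [tsum_congr hpt, ENNReal.tsum_add] at htop
  rcases ENNReal.add_eq_top.mp htop with h | h
  · exact ⟨S ∩ {n | 0 ≤ c n}, Set.inter_subset_left, h, Or.inl fun n hn => hn.2⟩
  · exact ⟨S ∩ {n | c n < 0}, Set.inter_subset_left, h, Or.inr fun n hn => hn.2.le⟩

theorem exists_tame_set_sending_to_infinity (a : ℕ → ℕ → ℝ)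
    (ha : ∀ i, CondConv (a i)) (i : ℕ) :
    ∃ A : Set ℕ,
      Tendsto (fun N => ∑ n ∈ Finset.range N, A.indicator (a i) n) atTop atTop ∧
      ∀ j : ℕ, {n ∈ A | 0 < a j n}.Finite ∨ {n ∈ A | a j n < 0}.Finite := by
  classical
  set b := a i with hb
  set f : ℕ → ℝ≥0∞ := fun n => ENNReal.ofReal (b n) with hf
  set pos := {n | 0 < b n} with hpos
  have htop0 : ∑' n, pos.indicator f n = ⊤ := by
    have : ∀ n, pos.indicator f n = f n := by
      intro n
      by_cases hn : n ∈ pos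
      · exact Set.indicator_of_mem hn f
      · rw [Set.indicator_of_notMem hn, hf]
        exact (ENNReal.ofReal_eq_zero.mpr (not_lt.mp hn)).symm
    rw [tsum_congr this]
    exact tsum_ofReal_top b (ha i)
  -- the state type
  let St := {p : Set ℕ × Finset ℕ //
    p.1 ⊆ pos ∧ (∑' n, p.1.indicator f n = ⊤) ∧ ↑p.2 ⊆ pos}
  have hstep : ∀ (j : ℕ) (p : St), ∃ q : St,
      q.1.1 ⊆ p.1.1 ∧ ((∀ n ∈ q.1.1, 0 ≤ a j n) ∨ (∀ n ∈ q.1.1, a j n ≤ 0)) ∧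
      p.1.2 ⊆ q.1.2 ∧ ((↑q.1.2 : Set ℕ) ⊆ ↑p.1.2 ∪ q.1.1) ∧
      ∑ n ∈ p.1.2, b n + 1 ≤ ∑ n ∈ q.1.2, b n := by
    intro j p
    obtain ⟨T, hTsub, hTtop, hTsign⟩ := split b p.1.1 p.2.2.1 (a j)
    have hTpos : T ⊆ pos := hTsub.trans p.2.1
    obtain ⟨F, hFT, hFG, hFsum⟩ := chunk b T hTpos hTtop p.1.2
    have hdisj : Disjoint p.1.2 F := Finset.disjoint_right.mpr fun n hF hG => hFG n hF hG
    refine ⟨⟨(T, p.1.2 ∪ F), hTpos, hTtop, ?_⟩, hTsub, hTsign,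
      Finset.subset_union_left, ?_, ?_⟩
    · show (↑(p.1.2 ∪ F) : Set ℕ) ⊆ pos
      rw [Finset.coe_union]
      exact Set.union_subset p.2.2.2 (hFT.trans hTpos)
    · show (↑(p.1.2 ∪ F) : Set ℕ) ⊆ (↑p.1.2 : Set ℕ) ∪ T
      rw [Finset.coe_union]
      exact Set.union_subset (Set.subset_union_left) (hFT.trans Set.subset_union_right)
    · show ∑ n ∈ p.1.2, b n + 1 ≤ ∑ n ∈ p.1.2 ∪ F, b n
      rw [Finset.sum_union hdisj]
      exact add_le_add_right hFsum _
  choose step hspec using hstep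
  let s0 : St := ⟨(pos, ∅), subset_rfl, htop0, by simp⟩
  let seq : ℕ → St := fun n => Nat.rec (motive := fun _ => St) s0 (fun j p => step j p) n
  let S : ℕ → Set ℕ := fun j => (seq j).1.1
  let G : ℕ → Finset ℕ := fun j => (seq j).1.2
  have hSpos : ∀ j, S j ⊆ pos := fun j => (seq j).2.1
  have hS1 : ∀ j, S (j + 1) ⊆ S j := fun j => (hspec j (seq j)).1
  have hsign : ∀ j, (∀ n ∈ S (j + 1), 0 ≤ a j n) ∨ (∀ n ∈ S (j + 1), a j n ≤ 0) :=
    fun j => (hspec j (seq j)).2.1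
  have hG1 : ∀ j, G j ⊆ G (j + 1) := fun j => (hspec j (seq j)).2.2.1
  have hGnew : ∀ j, (↑(G (j + 1)) : Set ℕ) ⊆ ↑(G j) ∪ S (j + 1) :=
    fun j => (hspec j (seq j)).2.2.2.1
  have hsum1 : ∀ j, ∑ n ∈ G j, b n + 1 ≤ ∑ n ∈ G (j + 1), b n :=
    fun j => (hspec j (seq j)).2.2.2.2
  have hG0 : G 0 = ∅ := rfl
  have hSanti : ∀ j k, j ≤ k → S k ⊆ S j := by
    intro j k h
    induction k, h using Nat.le_induction with
    | base => exact subset_rfl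
    | succ k hk ih => exact (hS1 k).trans ih
  have hGmono : ∀ j k, j ≤ k → G j ⊆ G k := by
    intro j k h
    induction k, h using Nat.le_induction with
    | base => exact subset_rfl
    | succ k hk ih => exact ih.trans (hG1 k)
  have hGsum : ∀ j : ℕ, (j : ℝ) ≤ ∑ n ∈ G j, b n := by
    intro j
    induction j with
    | zero => rw [hG0]; simp
    | succ j ih =>
      push_cast
      linarith [hsum1 j]
  have hGS : ∀ j k, j + 1 ≤ k → (↑(G k) : Set ℕ) ⊆ ↑(G (j + 1)) ∪ S (j + 1) := by
    intro j k h
    induction k, h using Nat.le_induction with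
    | base => exact Set.subset_union_left
    | succ k hk ih =>
      intro n hn
      rcases hGnew k hn with h' | h'
      · exact ih h'
      · exact Or.inr (hSanti (j + 1) (k + 1) (by omega) h')
  have hGall : ∀ j k, (↑(G k) : Set ℕ) ⊆ ↑(G (j + 1)) ∪ S (j + 1) := by
    intro j k
    rcases le_or_gt k (j + 1) with h | h
    · exact fun n hn => Or.inl (hGmono k (j + 1) h hn)
    · exact hGS j k h.le
  refine ⟨⋃ k, (↑(G k) : Set ℕ), ?_, ?_⟩
  · -- divergence
    set A := ⋃ k, (↑(G k) : Set ℕ) with hA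
    have hApos : A ⊆ pos := Set.iUnion_subset fun k => (seq k).2.2.2
    have hind : ∀ n, 0 ≤ A.indicator b n :=
      fun n => Set.indicator_apply_nonneg fun h => (hApos h).le
    refine tendsto_atTop_atTop_of_monotone ?_ ?_
    · intro N M h
      exact Finset.sum_le_sum_of_subset_of_nonneg (Finset.range_subset_range.mpr h)
        (fun n _ _ => hind n)
    · intro c
      refine ⟨(G ⌈c⌉₊).sup id + 1, ?_⟩
      have hsub : G ⌈c⌉₊ ⊆ Finset.range ((G ⌈c⌉₊).sup id + 1) :=
        fun n hn => Finset.mem_range.mpr (Nat.lt_succ_of_le (Finset.le_sup (f := id) hn))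
      calc c ≤ (⌈c⌉₊ : ℝ) := Nat.le_ceil c
        _ ≤ ∑ n ∈ G ⌈c⌉₊, b n := hGsum _
        _ = ∑ n ∈ G ⌈c⌉₊, A.indicator b n :=
          (Finset.sum_congr rfl fun n hn =>
            (Set.indicator_of_mem (Set.mem_iUnion.mpr ⟨⌈c⌉₊, hn⟩) b).symm)
        _ ≤ ∑ n ∈ Finset.range ((G ⌈c⌉₊).sup id + 1), A.indicator b n :=
          Finset.sum_le_sum_of_subset_of_nonneg hsub (fun n _ _ => hind n)
  · -- tameness
    intro j
    rcases hsign j with hs | hs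
    · right
      refine Set.Finite.subset (G (j + 1)).finite_toSet fun n hn => ?_
      obtain ⟨hAmem, hneg⟩ := hn
      obtain ⟨k, hk⟩ := Set.mem_iUnion.mp hAmem
      rcases hGall j k hk with h' | h'
      · exact h'
      · exact absurd (hs n h') (not_le.mpr hneg)
    · left
      refine Set.Finite.subset (G (j + 1)).finite_toSet fun n hn => ?_
      obtain ⟨hAmem, hposn⟩ := hn
      obtain ⟨k, hk⟩ := Set.mem_iUnion.mp hAmem
      rcases hGall j k hk with h' | h'
      · exact h'
      · exact absurd (hs n h') (not_le.mpr hposn)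
end

section
/- There exists a set X and a sequence of pairs of incompatible proper ideals (I_n, J_n) on X, n ∈ ℕ, such that no single set A ⊆ X chooses between I_n and J_n for infinitely many n. Concretely, taking X = 2^ℕ (Cantor space), with I_n the ideal of subsets of X nowhere dense in {x : x(n) = 0} and J_n the ideal of subsets nowhere dense in {x : x(n) = 1}, each pair (I_n, J_n) is a pair of incompatible proper ideals, and for every A ⊆ X the set of n such that A chooses between I_n and J_n is finite. -/
structure IsIdeal {X : Type*} (I : Set (Set X)) : Prop where
  finite_mem : ∀ A : Set X, A.Finite → A ∈ I
  union_mem : ∀ A B : Set X, A ∈ I → B ∈ I → A ∪ B ∈ I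
  subset_mem : ∀ A B : Set X, B ⊆ A → A ∈ I → B ∈ I

def IsProperIdeal {X : Type*} (I : Set (Set X)) : Prop :=
  IsIdeal I ∧ Set.univ ∉ I

def Incompatible {X : Type*} (I J : Set (Set X)) : Prop :=
  ∃ A : Set X, A ∈ I ∧ Aᶜ ∈ J

/-- `A` chooses between `I` and `J`. -/
def Chooses {X : Type*} (A : Set X) (I J : Set (Set X)) : Prop :=
  (A ∈ I ∧ A ∉ J) ∨ (A ∈ J ∧ A ∉ I)

/-- The ideal of subsets of Cantor space that are nowhere dense in the
subspace `{x | x n = b}`. -/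
def ndIdeal (n : ℕ) (b : Bool) : Set (Set (ℕ → Bool)) :=
  {A : Set (ℕ → Bool) |
    IsNowhereDense (Subtype.val ⁻¹' A : Set {x : ℕ → Bool // x n = b})}

/-! ### Auxiliary lemmas -/

private lemma nd_mono {X : Type*} [TopologicalSpace X] {s t : Set X}
    (h : s ⊆ t) (ht : IsNowhereDense t) : IsNowhereDense s := by
  have := interior_mono (closure_mono h)
  rw [ht] at this
  exact Set.subset_empty_iff.mp this

private lemma nd_union {X : Type*} [TopologicalSpace X] {s t : Set X}
    (hs : IsNowhereDense s) (ht : IsNowhereDense t) : IsNowhereDense (s ∪ t) := by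
  rw [IsNowhereDense, closure_union]
  rw [Set.eq_empty_iff_forall_notMem]
  intro x hx
  have hU : IsOpen (interior (closure s ∪ closure t)) := isOpen_interior
  have h1 : interior (closure s ∪ closure t) \ closure s ⊆ interior (closure t) := by
    apply interior_maximal
    · intro y hy
      rcases interior_subset hy.1 with h | h
      · exact absurd h hy.2
      · exact h
    · exact hU.sdiff isClosed_closure
  rw [ht] at h1
  have h2 : x ∈ closure s := by
    by_contra hxs
    exact h1 ⟨hx, hxs⟩
  have h3 : interior (closure s ∪ closure t) ⊆ interior (closure s) := by
    apply interior_maximal _ isOpen_interior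
    intro y hy
    by_contra hys
    exact h1 ⟨hy, hys⟩
  rw [hs] at h3
  exact h3 hx

/-- The half-space `{x | x n = b}`. -/
private def U (n : ℕ) (b : Bool) : Set (ℕ → Bool) := {x | x n = b}

private lemma U_eq (n : ℕ) (b : Bool) :
    U n b = (fun x : ℕ → Bool => x n) ⁻¹' {b} := rfl

private lemma isOpen_U (n : ℕ) (b : Bool) : IsOpen (U n b) := by
  rw [U_eq]
  exact (isOpen_discrete ({b} : Set Bool)).preimage (continuous_apply n)

private lemma isClosed_U (n : ℕ) (b : Bool) : IsClosed (U n b) := by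
  rw [U_eq]
  exact (isClosed_discrete ({b} : Set Bool)).preimage (continuous_apply n)

/-- Bridge: membership in `ndIdeal n b` is nowhere density of `A ∩ U n b` in the
whole Cantor space. -/
private lemma mem_ndIdeal_iff {n : ℕ} {b : Bool} {A : Set (ℕ → Bool)} :
    A ∈ ndIdeal n b ↔ IsNowhereDense (A ∩ U n b) := by
  have hopen : IsOpen (U n b) := isOpen_U n b
  have hemb := hopen.isOpenEmbedding_subtypeVal
  have hval : Set.range (Subtype.val : {x : ℕ → Bool // x n = b} → ℕ → Bool) = U n b :=
    Subtype.range_val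
  have himg : (Subtype.val : {x : ℕ → Bool // x n = b} → _) '' (Subtype.val ⁻¹' A)
      = A ∩ U n b := by
    rw [Set.image_preimage_eq_inter_range, hval]
  have hclo : closure (Subtype.val ⁻¹' A : Set {x : ℕ → Bool // x n = b})
      = Subtype.val ⁻¹' closure (A ∩ U n b) := by
    exact (hemb.isEmbedding.closure_eq_preimage_closure_image _).trans
      (congrArg (fun s => Subtype.val ⁻¹' closure s) himg)
  have hint : interior (closure (Subtype.val ⁻¹' A : Set {x : ℕ → Bool // x n = b}))
      = Subtype.val ⁻¹' interior (closure (A ∩ U n b)) := by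
    rw [hclo]
    exact (hemb.isOpenMap.preimage_interior_eq_interior_preimage hemb.continuous _).symm
  have hsub : interior (closure (A ∩ U n b)) ⊆ U n b := by
    refine interior_subset.trans ?_
    refine (closure_mono Set.inter_subset_right).trans ?_
    rw [(isClosed_U n b).closure_eq]
  constructor
  · intro h
    rw [ndIdeal, Set.mem_setOf_eq, IsNowhereDense, hint] at h
    rw [IsNowhereDense, Set.eq_empty_iff_forall_notMem]
    intro x hx
    have hxU : x ∈ U n b := hsub hx
    have : (⟨x, hxU⟩ : {x : ℕ → Bool // x n = b}) ∈
        (Subtype.val ⁻¹' interior (closure (A ∩ U n b))) := hx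
    rw [h] at this
    exact this
  · intro h
    rw [ndIdeal, Set.mem_setOf_eq, IsNowhereDense, hint, h]
    exact Set.preimage_empty

/-- Basic clopen cylinder. -/
private def cyl (x : ℕ → Bool) (F : Finset ℕ) : Set (ℕ → Bool) :=
  {y | ∀ i ∈ F, y i = x i}

private lemma isOpen_cyl (x : ℕ → Bool) (F : Finset ℕ) : IsOpen (cyl x F) := by
  have : cyl x F = ⋂ i ∈ F, {y : ℕ → Bool | y i = x i} := by
    ext y; simp [cyl]
  rw [this]
  refine isOpen_biInter_finset fun i _ => ?_
  have : {y : ℕ → Bool | y i = x i} = (fun y : ℕ → Bool => y i) ⁻¹' {x i} := rfl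
  rw [this]
  exact (isOpen_discrete ({x i} : Set Bool)).preimage (continuous_apply i)

private lemma mem_cyl_self (x : ℕ → Bool) (F : Finset ℕ) : x ∈ cyl x F :=
  fun _ _ => rfl

private lemma exists_cyl_subset {x : ℕ → Bool} {s : Set (ℕ → Bool)} (hs : s ∈ nhds x) :
    ∃ F : Finset ℕ, cyl x F ⊆ s := by
  rw [nhds_pi, Filter.mem_pi] at hs
  obtain ⟨I, hIfin, t, ht, hts⟩ := hs
  refine ⟨hIfin.toFinset, ?_⟩
  intro y hy
  apply hts
  intro i hi
  have hyi : y i = x i := hy i (hIfin.mem_toFinset.mpr hi)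
  rw [hyi]
  have := ht i
  simpa using mem_of_mem_nhds this

private lemma cyl_infinite (x : ℕ → Bool) (F : Finset ℕ) : (cyl x F).Infinite := by
  have : Infinite {m : ℕ // m ∉ F} := by
    have : (↑F : Set ℕ)ᶜ.Infinite := (F.finite_toSet).infinite_compl
    exact this.to_subtype
  apply Set.infinite_of_injective_forall_mem
    (f := fun m : {m : ℕ // m ∉ F} => Function.update x m.1 (!x m.1))
  case hi =>
    intro a b hab
    by_contra hne
    have hne' : a.1 ≠ b.1 := fun h => hne (Subtype.ext h)
    have h1 : Function.update x a.1 (!x a.1) a.1 = !x a.1 := Function.update_self _ _ _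
    have h2 : Function.update x b.1 (!x b.1) a.1 = x a.1 :=
      Function.update_of_ne hne' _ _
    have hab' : Function.update x (↑a) (!x ↑a) = Function.update x (↑b) (!x ↑b) := hab
    rw [hab', h2] at h1
    exact (Bool.not_ne_self (x a.1)).symm h1
  case hf =>
    intro a i hi
    have hne : i ≠ a.1 := by rintro rfl; exact a.2 hi
    exact Function.update_of_ne hne _ _

/-- If a cylinder avoiding coordinate `n` lies inside the closure of `A`, then
`A` is not in `ndIdeal n b`. -/
private lemma not_mem_ndIdeal {A : Set (ℕ → Bool)} {x : ℕ → Bool} {F : Finset ℕ}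
    (hsub : cyl x F ⊆ closure A) {n : ℕ} (hn : n ∉ F) (b : Bool) :
    A ∉ ndIdeal n b := by
  rw [mem_ndIdeal_iff]
  intro h
  set x' := Function.update x n b with hx'
  have hx'U : x' ∈ U n b := Function.update_self _ _ _
  have hx'cyl : x' ∈ cyl x F := by
    intro i hi
    have hne : i ≠ n := by rintro rfl; exact hn hi
    exact Function.update_of_ne hne _ _
  have hcylsub : cyl x' (insert n F) ⊆ U n b ∩ closure A := by
    intro y hy
    constructor
    · have hyn : y n = x' n := hy n (Finset.mem_insert_self n F)
      show y n = b
      rw [hyn]; exact hx'U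
    · apply hsub
      intro i hi
      rw [hy i (Finset.mem_insert_of_mem hi)]
      exact hx'cyl i hi
    -- note: hx'cyl i hi : x' i = x i
  have h2 : cyl x' (insert n F) ⊆ closure (A ∩ U n b) := by
    refine hcylsub.trans ?_
    have := (isOpen_U n b).inter_closure (t := A)
    refine this.trans ?_
    apply closure_mono
    rw [Set.inter_comm]
  have h3 : cyl x' (insert n F) ⊆ interior (closure (A ∩ U n b)) :=
    interior_maximal h2 (isOpen_cyl _ _)
  rw [h] at h3
  exact h3 (mem_cyl_self x' _) 

private lemma finite_nd {A : Set (ℕ → Bool)} (hA : A.Finite) : IsNowhereDense A := by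
  have hclosed : IsClosed A := hA.isClosed
  rw [hclosed.isNowhereDense_iff]
  rw [Set.eq_empty_iff_forall_notMem]
  intro x hx
  obtain ⟨F, hF⟩ := exists_cyl_subset (mem_interior_iff_mem_nhds.mp hx)
  exact (cyl_infinite x F) (hA.subset hF)

theorem no_infinite_choosing :
    (∀ n : ℕ,
      IsProperIdeal (ndIdeal n false) ∧ IsProperIdeal (ndIdeal n true) ∧
        Incompatible (ndIdeal n false) (ndIdeal n true)) ∧
    ∀ A : Set (ℕ → Bool),
      {n : ℕ | Chooses A (ndIdeal n false) (ndIdeal n true)}.Finite := by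
  have hideal : ∀ n b, IsProperIdeal (ndIdeal n b) := by
    intro n b
    constructor
    · constructor
      · intro A hA
        rw [mem_ndIdeal_iff]
        exact finite_nd (hA.subset Set.inter_subset_left)
      · intro A B hA hB
        rw [mem_ndIdeal_iff] at *
        rw [Set.union_inter_distrib_right]
        exact nd_union hA hB
      · intro A B hBA hA
        rw [mem_ndIdeal_iff] at *
        exact nd_mono (Set.inter_subset_inter_left _ hBA) hA
    · -- univ ∉ ndIdeal n b
      intro h
      exact not_mem_ndIdeal (A := Set.univ) (x := fun _ => b) (F := ∅)
        (by rw [closure_univ]; exact Set.subset_univ _) (Finset.notMem_empty n) b h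
  refine ⟨fun n => ⟨hideal n false, hideal n true, ?_⟩, ?_⟩
  · -- Incompatible
    refine ⟨U n true, ?_, ?_⟩
    · rw [mem_ndIdeal_iff]
      have : U n true ∩ U n false = ∅ := by
        ext x; simp [U]
      rw [this]; exact isNowhereDense_empty
    · rw [mem_ndIdeal_iff]
      have : (U n true)ᶜ ∩ U n true = ∅ := by
        ext x; simp [U]
      rw [this]; exact isNowhereDense_empty
  · intro A
    by_cases hA : IsNowhereDense A
    · have : {n : ℕ | Chooses A (ndIdeal n false) (ndIdeal n true)} = ∅ := by
        rw [Set.eq_empty_iff_forall_notMem]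
        intro n hn
        have hmem : ∀ b, A ∈ ndIdeal n b := fun b => by
          rw [mem_ndIdeal_iff]; exact nd_mono Set.inter_subset_left hA
        rcases hn with ⟨_, h2⟩ | ⟨_, h2⟩
        · exact h2 (hmem true)
        · exact h2 (hmem false)
      rw [this]; exact Set.finite_empty
    · obtain ⟨x, hx⟩ := Set.nonempty_iff_ne_empty.mpr hA
      obtain ⟨F, hF⟩ := exists_cyl_subset (mem_interior_iff_mem_nhds.mp hx)
      have hF' : cyl x F ⊆ closure A := hF
      apply Set.Finite.subset F.finite_toSet
      intro n hn
      by_contra hnF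
      have h0 := not_mem_ndIdeal hF' (by simpa using hnF) false
      have h1 := not_mem_ndIdeal hF' (by simpa using hnF) true
      rcases hn with ⟨h, _⟩ | ⟨h, _⟩
      · exact h0 h
      · exact h1 h
end
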